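/- Let k ≥ 2 be even, Γ a finite abelian group of order n, and S ⊆ Γ a symmetric set such that R_k(S) = Γ \ (S ∪ {0}) and 0 ∉ (k+1)S. Then Cay(Γ, S) is a C_{k+1}-saturated, |S|-regular graph on n vertices. -/

import Mathlib

open Pointwise

/-- The `m`-fold sumset of `S`. -/
def foldSum {Γ : Type*} [AddCommGroup Γ] (m : ℕ) (S : Set Γ) : Set Γ :=
  {x | ∃ s : Fin m → Γ, (∀ i, s i ∈ S) ∧ ∑ i, s i = x}

/-- `R_m(S)`: sums of `m` elements of `S` admitting an ordering with no
consecutive sub-sum (of length at least two) equal to `0`. -/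
def Rset {Γ : Type*} [AddCommGroup Γ] (m : ℕ) (S : Set Γ) : Set Γ :=
  {x | ∃ s : Fin m → Γ, (∀ i, s i ∈ S) ∧
    (∀ i j : Fin m, i < j → ∑ t ∈ Finset.Icc i j, s t ≠ 0) ∧ ∑ i, s i = x}

/-- The Cayley graph of a symmetric connection set `S`. -/
def cayley {Γ : Type*} [AddCommGroup Γ] (S : Set Γ) : SimpleGraph Γ :=
  SimpleGraph.fromRel (fun g h => g - h ∈ S)

/-- A graph is `d`-regular. -/
def isRegular {V : Type*} (G : SimpleGraph V) (d : ℕ) : Prop :=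
  ∀ v, (G.neighborSet v).ncard = d

lemma cayley_adj_sub {Γ : Type*} [AddCommGroup Γ] {S : Set Γ} (hsymm : S = -S) {a b : Γ}
    (h : (cayley S).Adj a b) : a - b ∈ S := by
  rw [cayley, SimpleGraph.fromRel_adj] at h
  rcases h.2 with h' | h'
  · exact h'
  · rw [hsymm, Set.mem_neg, neg_sub]; exact h'

lemma cayley_adj_of_sub {Γ : Type*} [AddCommGroup Γ] {S : Set Γ} (h0 : (0 : Γ) ∉ S) {a b : Γ}
    (h : a - b ∈ S) : (cayley S).Adj a b := by
  rw [cayley, SimpleGraph.fromRel_adj]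
  refine ⟨?_, Or.inl h⟩
  rintro rfl
  simp only [sub_self] at h
  exact h0 h

lemma walk_steps {Γ : Type*} [AddCommGroup Γ] {S : Set Γ} (hsymm : S = -S) :
    ∀ {u v : Γ} (w : (cayley S).Walk u v),
      ∃ s : Fin w.length → Γ, (∀ i, s i ∈ S) ∧ ∑ i, s i = u - v := by
  intro u v w
  induction w with
  | nil => exact ⟨fun _ => 0, fun i => i.elim0, by simp⟩
  | @cons a b c h p ih =>
    obtain ⟨s, hs, hsum⟩ := ih
    refine ⟨Fin.cons (a - b) s, ?_, ?_⟩
    · intro i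
      refine Fin.cases ?_ ?_ i
      · exact cayley_adj_sub hsymm h
      · intro j; simpa using hs j
    · show ∑ i : Fin (p.length + 1), Fin.cons (a - b) s i = a - c
      rw [Fin.sum_cons, hsum]
      abel

lemma exists_walk_of_chain {V : Type*} (G : SimpleGraph V) (p : ℕ → V) :
    ∀ m : ℕ, (∀ i < m, G.Adj (p i) (p (i + 1))) →
      ∃ w : G.Walk (p 0) (p m), w.support = (List.range (m + 1)).map p := by
  intro m
  induction m with
  | zero => intro _; exact ⟨SimpleGraph.Walk.nil, by simp [List.range_succ]⟩
  | succ m ih =>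
    intro h
    obtain ⟨w, hw⟩ := ih (fun i hi => h i (by omega))
    refine ⟨w.concat (h m (by omega)), ?_⟩
    rw [SimpleGraph.Walk.support_concat, hw]
    simp [List.range_succ]

theorem stmt3 {Γ : Type*} [AddCommGroup Γ] [Finite Γ] (k n : ℕ) (hk : 2 ≤ k)
    (hke : Even k) (hn : Nat.card Γ = n) (S : Set Γ) (hsymm : S = -S)
    (hR : Rset k S = (S ∪ {0})ᶜ)
    (h0 : (0 : Γ) ∉ foldSum (k + 1) S) :
    ((∀ (v : Γ) (c : (cayley S).Walk v v), c.IsCycle → c.length ≠ k + 1) ∧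
      (∀ x y : Γ, x ≠ y → ¬ (cayley S).Adj x y →
        ∃ (v : Γ) (c : ((cayley S) ⊔ SimpleGraph.fromEdgeSet {s(x, y)}).Walk v v),
          c.IsCycle ∧ c.length = k + 1)) ∧
    isRegular (cayley S) S.ncard := by
  have h0S : (0 : Γ) ∉ S := fun h => h0 ⟨fun _ => 0, fun _ => h, by simp⟩
  refine ⟨⟨?_, ?_⟩, ?_⟩
  · -- no (k+1)-cycle
    intro v c _ hlen
    obtain ⟨s, hs, hsum⟩ := walk_steps hsymm c
    apply h0
    exact ⟨fun i => s (Fin.cast hlen.symm i), fun i => hs _,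
      (Fintype.sum_equiv (finCongr hlen.symm) _ s (fun _ => rfl)).trans
        (by rw [hsum, sub_self])⟩
  · -- saturation
    intro x y hxy hnadj
    have hxyS : x - y ∉ S := fun h => hnadj (cayley_adj_of_sub h0S h)
    have hmem : x - y ∈ Rset k S := by
      rw [hR]
      simp only [Set.mem_compl_iff, Set.mem_union, Set.mem_singleton_iff, sub_eq_zero]
      tauto
    obtain ⟨s, hsS, hcons, hsum⟩ := hmem
    set s' : ℕ → Γ := fun t => if h : t < k then s ⟨t, h⟩ else 0 with hs'
    set p : ℕ → Γ := fun i => y + ∑ t ∈ Finset.range i, s' t with hp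
    have hp0 : p 0 = y := by simp [hp]
    have hsum' : ∑ t ∈ Finset.range k, s' t = x - y := by
      rw [← Fin.sum_univ_eq_sum_range, ← hsum]
      exact Finset.sum_congr rfl (fun i _ => by simp [hs', i.isLt])
    have hpk : p k = x := by simp [hp, hsum']
    have hstep : ∀ i, p (i + 1) - p i = s' i := by
      intro i
      simp only [hp, Finset.sum_range_succ]
      abel
    have hdiff : ∀ a b : ℕ, a < b → b ≤ k → p b - p a ≠ 0 := by
      intro a b hab hbk
      have key : p b - p a = ∑ t ∈ Finset.Ico a b, s' t := by
        simp only [hp, add_sub_add_left_eq_sub]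
        rw [Finset.sum_Ico_eq_sub _ hab.le]
      rw [key]
      rcases eq_or_lt_of_le (Nat.succ_le_of_lt hab) with hb | hb
      · rw [← hb, Nat.Ico_succ_singleton, Finset.sum_singleton]
        have ha : a < k := by omega
        have hmem' : s' a ∈ S := by simp only [hs', dif_pos ha]; exact hsS _
        intro hz
        exact h0S (hz ▸ hmem')
      · -- b ≥ a + 2
        have ha : a < k := by omega
        have hb1 : b - 1 < k := by omega
        have hij : (⟨a, ha⟩ : Fin k) < ⟨b - 1, hb1⟩ := by
          simp [Fin.lt_def]; omega
        have := hcons ⟨a, ha⟩ ⟨b - 1, hb1⟩ hij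
        intro hzero
        apply this
        rw [← hzero]
        have hmap : (Finset.Icc (⟨a, ha⟩ : Fin k) ⟨b - 1, hb1⟩).map Fin.valEmbedding
            = Finset.Icc a (b - 1) := Fin.map_valEmbedding_Icc _ _
        calc ∑ t ∈ Finset.Icc (⟨a, ha⟩ : Fin k) ⟨b - 1, hb1⟩, s t
            = ∑ t ∈ Finset.Icc (⟨a, ha⟩ : Fin k) ⟨b - 1, hb1⟩, s' t.val := by
              refine Finset.sum_congr rfl fun t _ => ?_
              simp [hs', t.isLt]
          _ = ∑ u ∈ Finset.Icc a (b - 1), s' u := by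
              rw [← hmap, Finset.sum_map]
              rfl
          _ = ∑ t ∈ Finset.Ico a b, s' t := by
              congr 1
              rw [← Finset.Ico_add_one_right_eq_Icc]
              congr 1
              omega
    have hadj : ∀ i < k, (cayley S).Adj (p i) (p (i + 1)) := by
      intro i hi
      have : p (i + 1) - p i ∈ S := by
        rw [hstep]
        simp only [hs', dif_pos hi]
        exact hsS _
      exact (cayley_adj_of_sub h0S this).symm
    obtain ⟨w, hw⟩ := exists_walk_of_chain (cayley S) p k hadj
    have hlenw : w.length = k := by
      have := w.length_support
      rw [hw] at this
      simp at this
      omega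
    have hwpath : w.support.Nodup := by
      rw [hw]
      refine List.Nodup.map_on ?_ List.nodup_range
      intro a ha b hb hab
      simp only [List.mem_range] at ha hb
      by_contra hne
      rcases Nat.lt_or_ge a b with h' | h'
      · exact hdiff a b h' (by omega) (by rw [hab]; simp)
      · have h'' : b < a := by omega
        exact hdiff b a h'' (by omega) (by rw [hab]; simp)
    -- transfer to the supergraph
    set G' := (cayley S) ⊔ SimpleGraph.fromEdgeSet {s(x, y)} with hG'
    have hle : cayley S ≤ G' := le_sup_left
    have hedges : ∀ e ∈ w.edges, e ∈ G'.edgeSet := fun e he =>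
      SimpleGraph.edgeSet_mono hle (w.edges_subset_edgeSet he)
    set w' : G'.Walk (p 0) (p k) := w.transfer G' hedges with hw'
    set P : G'.Walk y x := w'.copy hp0 hpk with hP
    have hPsupp : P.support = w.support := by
      rw [hP, SimpleGraph.Walk.support_copy, hw', SimpleGraph.Walk.support_transfer]
    have hPedges : P.edges = w.edges := by
      rw [hP, SimpleGraph.Walk.edges_copy, hw', SimpleGraph.Walk.edges_transfer]
    have hPlen : P.length = k := by
      rw [hP, SimpleGraph.Walk.length_copy, hw', SimpleGraph.Walk.length_transfer, hlenw]
    have hadjxy : G'.Adj x y := by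
      refine Or.inr ?_
      rw [SimpleGraph.fromEdgeSet_adj]
      exact ⟨rfl, hxy⟩
    refine ⟨x, SimpleGraph.Walk.cons hadjxy P, ?_, ?_⟩
    · rw [SimpleGraph.Walk.cons_isCycle_iff]
      constructor
      · rw [SimpleGraph.Walk.isPath_def, hPsupp]; exact hwpath
      · intro hmem'
        rw [hPedges] at hmem'
        have := w.edges_subset_edgeSet hmem'
        rw [SimpleGraph.mem_edgeSet] at this
        exact hnadj this
    · rw [SimpleGraph.Walk.length_cons, hPlen]
  · -- regularity
    intro v
    have himg : (cayley S).neighborSet v = (fun t => v - t) '' S := by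
      ext w
      simp only [SimpleGraph.mem_neighborSet, Set.mem_image]
      constructor
      · intro h
        exact ⟨v - w, cayley_adj_sub hsymm h, by rw [sub_sub_cancel]⟩
      · rintro ⟨t, ht, rfl⟩
        exact cayley_adj_of_sub h0S (by rwa [sub_sub_cancel])
    rw [himg, Set.ncard_image_of_injective _ sub_right_injective]
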